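/- (gcd stability under the Liouville construction.) Let q₀ ∈ ℕ positive, (p₁, p₂, q₀) ∈ ℤ³ with gcd(p₁,p₂,q₀)=1, let m,n ∈ ℤ, d = gcd(p₁+m q₀, p₂+n q₀), and write (p₁+m q₀, p₂+n q₀) = d·u with u primitive. Let ũ ∈ ℤ² satisfy |u × ũ| = 1, and set (m',n') = (m,n) + 2(ũ + a u) for some a ∈ ℤ. Then d' := gcd(p₁+m' q₀, p₂+n' q₀) satisfies d' = gcd(d, 2q₀) ≤ gcd(2q₀, d), and in particular d' ≤ 2 whenever gcd(p₁,p₂,q₀) = 1 forces gcd(d, q₀) = 1. -/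

import Mathlib

/-- gcd stability under the Liouville construction: the new gcd `d'` equals
`gcd(d, 2q₀)`, and is at most `2`. -/
theorem liouville_gcd_stability
    (p₁ p₂ : ℤ) (q₀ : ℤ) (hq₀ : 0 < q₀)
    (hcop : Int.gcd p₁ (Int.gcd p₂ q₀) = 1)
    (m n a : ℤ) (u ut : ℤ × ℤ)
    (d : ℤ) (hd : d = Int.gcd (p₁ + m * q₀) (p₂ + n * q₀))
    (hu₁ : p₁ + m * q₀ = d * u.1) (hu₂ : p₂ + n * q₀ = d * u.2)
    (hprim : Int.gcd u.1 u.2 = 1)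
    (hdet : |u.1 * ut.2 - u.2 * ut.1| = 1)
    (m' n' : ℤ)
    (hm' : m' = m + 2 * (ut.1 + a * u.1)) (hn' : n' = n + 2 * (ut.2 + a * u.2)) :
    (Int.gcd (p₁ + m' * q₀) (p₂ + n' * q₀) : ℤ) = Int.gcd d (2 * q₀) ∧
    (Int.gcd (p₁ + m' * q₀) (p₂ + n' * q₀) : ℤ) ≤ 2 := by
  have hA : p₁ + m' * q₀ = (d + 2 * a * q₀) * u.1 + 2 * q₀ * ut.1 := by
    rw [hm']; linear_combination hu₁
  have hB : p₂ + n' * q₀ = (d + 2 * a * q₀) * u.2 + 2 * q₀ * ut.2 := by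
    rw [hn']; linear_combination hu₂
  set A := p₁ + m' * q₀ with hAdef
  set B := p₂ + n' * q₀ with hBdef
  -- gcd(d, 2q₀) divides A and B
  obtain ⟨k, hk⟩ : (Int.gcd d (2 * q₀) : ℤ) ∣ d := Int.gcd_dvd_left _ _
  obtain ⟨l, hl⟩ : (Int.gcd d (2 * q₀) : ℤ) ∣ 2 * q₀ := Int.gcd_dvd_right _ _
  have hgdA : (Int.gcd d (2 * q₀) : ℤ) ∣ A :=
    ⟨k * u.1 + a * l * u.1 + l * ut.1, by
      rw [hA]; linear_combination u.1 * hk + (a * u.1 + ut.1) * hl⟩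
  have hgdB : (Int.gcd d (2 * q₀) : ℤ) ∣ B :=
    ⟨k * u.2 + a * l * u.2 + l * ut.2, by
      rw [hB]; linear_combination u.2 * hk + (a * u.2 + ut.2) * hl⟩
  -- conversely, gcd(A,B) divides d + 2aq₀ and 2q₀
  have hdet' : u.1 * ut.2 - u.2 * ut.1 = 1 ∨ u.1 * ut.2 - u.2 * ut.1 = -1 :=
    (abs_eq (by norm_num : (0:ℤ) ≤ 1)).mp hdet
  have h1 : (Int.gcd A B : ℤ) ∣ A * ut.2 - B * ut.1 :=
    dvd_sub ((Int.gcd_dvd_left _ _).mul_right _) ((Int.gcd_dvd_right _ _).mul_right _)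
  have h2 : (Int.gcd A B : ℤ) ∣ A * u.2 - B * u.1 :=
    dvd_sub ((Int.gcd_dvd_left _ _).mul_right _) ((Int.gcd_dvd_right _ _).mul_right _)
  have he1 : A * ut.2 - B * ut.1 = (d + 2 * a * q₀) * (u.1 * ut.2 - u.2 * ut.1) := by
    rw [hA, hB]; ring
  have he2 : A * u.2 - B * u.1 = -(2 * q₀) * (u.1 * ut.2 - u.2 * ut.1) := by
    rw [hA, hB]; ring
  have hABd2 : (Int.gcd A B : ℤ) ∣ d + 2 * a * q₀ := by
    rcases hdet' with h | h <;> rw [he1, h] at h1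
    · rwa [mul_one] at h1
    · rwa [mul_neg_one, dvd_neg] at h1
  have hAB2q : (Int.gcd A B : ℤ) ∣ 2 * q₀ := by
    rcases hdet' with h | h <;> rw [he2, h] at h2
    · rw [mul_one] at h2; exact dvd_neg.mp h2
    · rwa [neg_mul_neg, mul_one] at h2
  have hABd : (Int.gcd A B : ℤ) ∣ d := by
    have : (Int.gcd A B : ℤ) ∣ (d + 2 * a * q₀) - a * (2 * q₀) :=
      dvd_sub hABd2 (hAB2q.mul_left a)
    have hc : (d + 2 * a * q₀) - a * (2 * q₀) = d := by ring
    rwa [hc] at this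
  have heq : (Int.gcd A B : ℤ) = Int.gcd d (2 * q₀) :=
    Int.dvd_antisymm (Int.natCast_nonneg _) (Int.natCast_nonneg _)
      (Int.dvd_coe_gcd hABd hAB2q) (Int.dvd_coe_gcd hgdA hgdB)
  refine ⟨heq, ?_⟩
  rw [heq]
  -- gcd(d, q₀) = 1
  have hdp1 : d ∣ p₁ + m * q₀ := ⟨u.1, hu₁⟩
  have hdp2 : d ∣ p₂ + n * q₀ := ⟨u.2, hu₂⟩
  have hgq : (Int.gcd d q₀ : ℤ) ∣ q₀ := Int.gcd_dvd_right _ _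
  have hgp1 : (Int.gcd d q₀ : ℤ) ∣ p₁ := by
    have : (Int.gcd d q₀ : ℤ) ∣ (p₁ + m * q₀) - m * q₀ :=
      dvd_sub ((Int.gcd_dvd_left _ _).trans hdp1) (hgq.mul_left m)
    simpa using this
  have hgp2 : (Int.gcd d q₀ : ℤ) ∣ p₂ := by
    have : (Int.gcd d q₀ : ℤ) ∣ (p₂ + n * q₀) - n * q₀ :=
      dvd_sub ((Int.gcd_dvd_left _ _).trans hdp2) (hgq.mul_left n)
    simpa using this
  have hg1 : (Int.gcd d q₀ : ℤ) ∣ 1 := by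
    have h := Int.dvd_coe_gcd hgp1 (Int.dvd_coe_gcd hgp2 hgq)
    rwa [hcop] at h
  have hg1' : Int.gcd d q₀ = 1 := by
    have : (Int.gcd d q₀ : ℕ) ∣ 1 := by exact_mod_cast hg1
    exact Nat.dvd_one.mp this
  -- gcd(d, 2q₀) divides gcd(2d, 2q₀) = 2 gcd(d, q₀) = 2
  have h2d : (Int.gcd d (2 * q₀) : ℤ) ∣ (Int.gcd (2 * d) (2 * q₀) : ℤ) :=
    Int.dvd_coe_gcd ((Int.gcd_dvd_left _ _).mul_left 2) (Int.gcd_dvd_right _ _)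
  have hmul : Int.gcd (2 * d) (2 * q₀) = 2 * Int.gcd d q₀ := by
    rw [Int.gcd_mul_left]; norm_num
  rw [hmul, hg1'] at h2d
  exact Int.le_of_dvd (by norm_num) (by exact_mod_cast h2d)
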